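/- Let H be a separable complex Hilbert space, let n ∈ ℕ, and let p : [0,1] → B(H) be strongly continuous with each p(t) a projection such that dim(range p(t)) ≥ n for every t ∈ [0,1]. Then there exists a map q : [0,1] → B(H), continuous in operator norm, such that each q(t) is a projection, q(t) ≤ p(t) (i.e., p(t) q(t) = q(t) = q(t) p(t)) and dim(range q(t)) = n for every t ∈ [0,1]. (The continuous field of Hilbert spaces determined by p has a trivial subfield of rank n.) -/

import Mathlib

set_option linter.unusedSectionVars false
set_option linter.unusedVariables false
set_option maxHeartbeats 1000000

open ContinuousLinearMap Module

/-- A projection on a Hilbert space: a self-adjoint idempotent bounded operator. -/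
def IsProjection {H : Type*} [NormedAddCommGroup H] [InnerProductSpace ℂ H]
    [CompleteSpace H] (p : H →L[ℂ] H) : Prop :=
  IsSelfAdjoint p ∧ p * p = p

section Aux

variable {H : Type*} [NormedAddCommGroup H] [InnerProductSpace ℂ H] [CompleteSpace H]

local notation "⟪" x ", " y "⟫" => @inner ℂ _ _ x y

lemma IsProjection.inner_comm {P : H →L[ℂ] H} (hP : IsProjection P) (x y : H) :
    ⟪P x, y⟫ = ⟪x, P y⟫ :=
  (ContinuousLinearMap.isSelfAdjoint_iff_isSymmetric.1 hP.1) x y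

lemma IsProjection.idem {P : H →L[ℂ] H} (hP : IsProjection P) (x : H) : P (P x) = P x := by
  have h := ContinuousLinearMap.ext_iff.1 hP.2 x
  simpa [ContinuousLinearMap.mul_apply] using h

lemma IsProjection.norm_apply_le {P : H →L[ℂ] H} (hP : IsProjection P) (x : H) :
    ‖P x‖ ≤ ‖x‖ := by
  rcases eq_or_lt_of_le (norm_nonneg (P x)) with h0 | hpos
  · rw [← h0]; exact norm_nonneg x
  · have h1 : ‖P x‖ ^ 2 = RCLike.re ⟪P x, P x⟫ := (inner_self_eq_norm_sq (𝕜 := ℂ) _).symm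
    have h2 : ⟪P x, P x⟫ = ⟪x, P x⟫ := by
      rw [hP.inner_comm, hP.idem]
    have h3 : RCLike.re ⟪x, P x⟫ ≤ ‖x‖ * ‖P x‖ := re_inner_le_norm _ _
    nlinarith [h1, h2 ▸ h1]

/-- joint continuity of a strongly continuous uniformly bounded family -/
lemma joint_cont {X Y : Type*} [TopologicalSpace X] [TopologicalSpace Y]
    (p : X → H →L[ℂ] H) (hsc : ∀ v : H, Continuous fun t => p t v)
    (hb : ∀ t w, ‖p t w‖ ≤ ‖w‖)
    (τ : Y → X) (g : Y → H) (hτ : Continuous τ) (hg : Continuous g) :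
    Continuous fun t => p (τ t) (g t) := by
  rw [continuous_iff_continuousAt]
  intro t₀
  rw [ContinuousAt, tendsto_iff_dist_tendsto_zero]
  apply squeeze_zero (fun t => dist_nonneg)
    (g := fun t => ‖g t - g t₀‖ + ‖p (τ t) (g t₀) - p (τ t₀) (g t₀)‖)
  · intro t
    rw [dist_eq_norm]
    calc ‖p (τ t) (g t) - p (τ t₀) (g t₀)‖
        ≤ ‖p (τ t) (g t) - p (τ t) (g t₀)‖ + ‖p (τ t) (g t₀) - p (τ t₀) (g t₀)‖ := by
          simpa using norm_sub_le_norm_sub_add_norm_sub (p (τ t) (g t)) (p (τ t) (g t₀))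
            (p (τ t₀) (g t₀))
    _ ≤ ‖g t - g t₀‖ + ‖p (τ t) (g t₀) - p (τ t₀) (g t₀)‖ := by
          gcongr
          rw [← map_sub]
          exact hb _ _
  · have h1 : Continuous fun t => ‖g t - g t₀‖ + ‖p (τ t) (g t₀) - p (τ t₀) (g t₀)‖ := by
      apply Continuous.add
      · exact (hg.sub continuous_const).norm
      · exact (((hsc (g t₀)).comp hτ).sub continuous_const).norm
    have h := h1.tendsto t₀
    simpa using h

end Aux

section Main

variable {H : Type*} [NormedAddCommGroup H] [InnerProductSpace ℂ H] [CompleteSpace H]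

local notation "⟪" x ", " y "⟫" => @inner ℂ _ _ x y

/-- rank one operator -/
noncomputable def rk1 (w : H) : H →L[ℂ] H := (innerSL ℂ w).smulRight w

lemma rk1_apply (w x : H) : rk1 w x = ⟪w, x⟫ • w := rfl

variable {w : H} (hw : ‖w‖ = 1)
include hw

lemma inner_self_one : ⟪w, w⟫ = 1 := by
  rw [inner_self_eq_norm_sq_to_K, hw]; norm_num

lemma rk1_proj : IsProjection (rk1 w) := by
  constructor
  · rw [ContinuousLinearMap.isSelfAdjoint_iff_isSymmetric]
    intro x y
    simp only [rk1_apply, ContinuousLinearMap.coe_coe]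
    rw [inner_smul_left, inner_smul_right, inner_conj_symm]
    ring
  · ext x
    simp only [ContinuousLinearMap.mul_apply, rk1_apply, inner_smul_right,
      inner_self_one hw, smul_smul, mul_one]

lemma rk1_fix : rk1 w w = w := by
  rw [rk1_apply, inner_self_one hw, one_smul]

lemma rk1_range : LinearMap.range (rk1 w : H →ₗ[ℂ] H) = Submodule.span ℂ {w} := by
  apply le_antisymm
  · rintro x ⟨y, rfl⟩
    exact Submodule.smul_mem _ _ (Submodule.mem_span_singleton_self w)
  · rw [Submodule.span_singleton_le_iff_mem]
    exact ⟨w, rk1_fix hw⟩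

omit hw

lemma rk1_sub_norm {w w' : H} (hw : ‖w‖ = 1) (hw' : ‖w'‖ = 1) :
    ‖rk1 w - rk1 w'‖ ≤ 2 * ‖w - w'‖ := by
  apply ContinuousLinearMap.opNorm_le_bound _ (by positivity)
  intro x
  have : (rk1 w - rk1 w') x = ⟪w, x⟫ • (w - w') + ⟪w - w', x⟫ • w' := by
    simp only [ContinuousLinearMap.sub_apply, rk1_apply, inner_sub_left, sub_smul, smul_sub]
    abel
  rw [this]
  calc ‖⟪w, x⟫ • (w - w') + ⟪w - w', x⟫ • w'‖
      ≤ ‖⟪w, x⟫ • (w - w')‖ + ‖⟪w - w', x⟫ • w'‖ := norm_add_le _ _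
    _ ≤ ‖w‖ * ‖x‖ * ‖w - w'‖ + ‖w - w'‖ * ‖x‖ * ‖w'‖ := by
        rw [norm_smul, norm_smul]
        gcongr <;> exact norm_inner_le_norm _ _
    _ = 2 * ‖w - w'‖ * ‖x‖ := by rw [hw, hw']; ring

lemma rk1_cont {X : Type*} [TopologicalSpace X] {v : X → H} (hv : Continuous v)
    (hv1 : ∀ t, ‖v t‖ = 1) : Continuous fun t => rk1 (v t) := by
  rw [continuous_iff_continuousAt]
  intro t₀
  rw [ContinuousAt, tendsto_iff_dist_tendsto_zero]
  apply squeeze_zero (fun t => dist_nonneg) (g := fun t => 2 * ‖v t - v t₀‖)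
  · intro t
    rw [dist_eq_norm]
    exact rk1_sub_norm (hv1 t) (hv1 t₀)
  · have : Continuous fun t => 2 * ‖v t - v t₀‖ := by continuity
    have h := this.tendsto t₀
    simpa using h





/-- A path in the unit-ish sphere from `x` to `exp(θ I) • yh`. -/
noncomputable def pathγ (x yh : H) (θ : ℝ) : ℝ → H := fun σ =>
  if σ ≤ 1/2 then ((1 - 2*σ : ℝ) : ℂ) • x + ((2*σ : ℝ) : ℂ) • yh
  else Complex.exp ((θ*(2*σ - 1) : ℝ) * Complex.I) • yh

lemma pathγ_cont (x yh : H) (θ : ℝ) : Continuous (pathγ x yh θ) := by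
  unfold pathγ
  apply Continuous.if_le
  · apply Continuous.add
    · exact (Complex.continuous_ofReal.comp
        (continuous_const.sub (continuous_const.mul continuous_id))).smul continuous_const
    · exact (Complex.continuous_ofReal.comp
        (continuous_const.mul continuous_id)).smul continuous_const
  · apply Continuous.smul _ continuous_const
    apply Complex.continuous_exp.comp
    exact (Complex.continuous_ofReal.comp
      (continuous_const.mul ((continuous_const.mul continuous_id).sub continuous_const))).mul
      continuous_const
  · exact continuous_id
  · exact continuous_const
  · intro σ hσ
    rw [hσ]
    norm_num

lemma pathγ_zero (x yh : H) (θ : ℝ) : pathγ x yh θ 0 = x := by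
  unfold pathγ; norm_num

lemma pathγ_one (x yh : H) (θ : ℝ) :
    pathγ x yh θ 1 = Complex.exp ((θ:ℝ) * Complex.I) • yh := by
  unfold pathγ; norm_num

lemma pathγ_comb (x yh : H) (θ : ℝ) (σ : ℝ) :
    ∃ a b : ℂ, pathγ x yh θ σ = a • x + b • yh := by
  unfold pathγ
  split_ifs
  · exact ⟨_, _, rfl⟩
  · exact ⟨0, Complex.exp ((θ*(2*σ - 1) : ℝ) * Complex.I), by rw [zero_smul, zero_add]⟩

lemma pathγ_low (x yh : H) (θ : ℝ) (hx1 : ‖x‖ = 1) (hyh1 : ‖yh‖ = 1)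
    (hre0 : 0 ≤ (⟪x, yh⟫).re) (hre1 : (⟪x, yh⟫).re ≤ 1)
    (σ : ℝ) (h0 : 0 ≤ σ) (h1 : σ ≤ 1) : 1/2 ≤ ‖pathγ x yh θ σ‖ := by
  unfold pathγ
  split_ifs with hσ
  · set g := ((1 - 2*σ : ℝ) : ℂ) • x + ((2*σ : ℝ) : ℂ) • yh with hgdef
    have hinx : (⟪x, g⟫).re = (1 - 2*σ) + 2*σ * (⟪x, yh⟫).re := by
      rw [hgdef, inner_add_right, inner_smul_right, inner_smul_right,
        inner_self_eq_norm_sq_to_K, hx1]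
      push_cast
      simp [Complex.add_re, Complex.mul_re]
    have hconj : (⟪yh, x⟫ : ℂ).re = (⟪x, yh⟫).re := by
      rw [← inner_conj_symm x yh, Complex.conj_re]
    have hinyh : (⟪yh, g⟫).re = (1 - 2*σ) * (⟪x, yh⟫).re + 2*σ := by
      rw [hgdef, inner_add_right, inner_smul_right, inner_smul_right,
        inner_self_eq_norm_sq_to_K, hyh1]
      push_cast
      simp [Complex.add_re, Complex.mul_re, hconj]
    have hbx : (⟪x, g⟫).re ≤ ‖g‖ := by
      have := re_inner_le_norm (𝕜 := ℂ) x g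
      rwa [hx1, one_mul, RCLike.re_to_complex] at this
    have hbyh : (⟪yh, g⟫).re ≤ ‖g‖ := by
      have := re_inner_le_norm (𝕜 := ℂ) yh g
      rwa [hyh1, one_mul, RCLike.re_to_complex] at this
    by_cases hσ4 : σ ≤ 1/4
    · nlinarith
    · nlinarith
  · rw [norm_smul, Complex.norm_exp_ofReal_mul_I, one_mul, hyh1]
    norm_num

lemma pathγ_dec (x yh : H) (θ : ℝ) (σ : ℝ) (h0 : 0 ≤ σ) (h1 : σ ≤ 1)
    (P : H →L[ℂ] H) :
    ‖P (pathγ x yh θ σ) - pathγ x yh θ σ‖ ≤ ‖P x - x‖ + ‖P yh - yh‖ := by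
  unfold pathγ
  split_ifs with hσ
  · have heq : P (((1 - 2*σ : ℝ) : ℂ) • x + ((2*σ : ℝ) : ℂ) • yh)
        - (((1 - 2*σ : ℝ) : ℂ) • x + ((2*σ : ℝ) : ℂ) • yh)
        = ((1 - 2*σ : ℝ) : ℂ) • (P x - x) + ((2*σ : ℝ) : ℂ) • (P yh - yh) := by
      simp only [map_add, map_smul, smul_sub]
      abel
    rw [heq]
    calc ‖((1 - 2*σ : ℝ) : ℂ) • (P x - x) + ((2*σ : ℝ) : ℂ) • (P yh - yh)‖
        ≤ ‖((1 - 2*σ : ℝ) : ℂ) • (P x - x)‖ + ‖((2*σ : ℝ) : ℂ) • (P yh - yh)‖ :=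
          norm_add_le _ _
      _ ≤ 1 * ‖P x - x‖ + 1 * ‖P yh - yh‖ := by
          rw [norm_smul, norm_smul, Complex.norm_real, Complex.norm_real]
          gcongr
          · rw [Real.norm_eq_abs, abs_of_nonneg (by linarith)]; linarith
          · rw [Real.norm_eq_abs, abs_of_nonneg (by linarith)]; linarith
      _ = ‖P x - x‖ + ‖P yh - yh‖ := by ring
  · have heq : P (Complex.exp ((θ*(2*σ - 1) : ℝ) * Complex.I) • yh)
        - Complex.exp ((θ*(2*σ - 1) : ℝ) * Complex.I) • yh
        = Complex.exp ((θ*(2*σ - 1) : ℝ) * Complex.I) • (P yh - yh) := by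
      rw [map_smul, smul_sub]
    rw [heq, norm_smul, Complex.norm_exp_ofReal_mul_I, one_mul]
    exact le_add_of_nonneg_left (norm_nonneg _)


lemma step_lemma (p : Set.Icc (0:ℝ) 1 → H →L[ℂ] H)
    (hsc : ∀ v : H, Continuous fun t => p t v)
    (hproj : ∀ t, IsProjection (p t))
    (b m : Set.Icc (0:ℝ) 1) (hbm : b ≤ m)
    (v : Set.Icc (0:ℝ) 1 → H) (hv : Continuous v)
    (hvp : ∀ t, t ≤ b → ‖v t‖ = 1 ∧ p t (v t) = v t)
    (u : H) (hu : ‖u‖ = 1)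
    (hmu : ∀ t, b ≤ t → t ≤ m → ‖p t u - u‖ ≤ 1/4) :
    ∃ v' : Set.Icc (0:ℝ) 1 → H, Continuous v' ∧
      ∀ t, t ≤ m → ‖v' t‖ = 1 ∧ p t (v' t) = v' t := by
  rcases eq_or_lt_of_le hbm with rfl | hlt
  · exact ⟨v, hv, fun t ht => hvp t ht⟩
  have hb1 := hvp b le_rfl
  set x := v b with hxdef
  have hx1 : ‖x‖ = 1 := hb1.1
  have hpx : p b x = x := hb1.2
  -- the target vector y
  have hpbu : ‖p b u - u‖ ≤ 1/4 := hmu b le_rfl hbm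
  have hnpu_ge : (3:ℝ)/4 ≤ ‖p b u‖ := by
    have h := norm_sub_norm_le u (p b u)
    rw [norm_sub_rev] at h
    rw [hu] at h
    linarith
  have hnpu_le : ‖p b u‖ ≤ 1 := by
    have := (hproj b).norm_apply_le u
    rwa [hu] at this
  have hnpupos : (0:ℝ) < ‖p b u‖ := by linarith
  set y := (‖p b u‖)⁻¹ • p b u with hydef
  have hy1 : ‖y‖ = 1 := by
    rw [hydef, norm_smul, norm_inv, norm_norm]
    field_simp
  have hpy : p b y = y := by
    rw [hydef, map_smul_of_tower, (hproj b).idem]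
  have hyu : ‖y - u‖ ≤ 1/2 := by
    have h0 : y - p b u = ((‖p b u‖)⁻¹ - 1) • p b u := by
      rw [hydef, sub_smul, one_smul]
    have h1 : ‖y - p b u‖ = |1 - ‖p b u‖| := by
      rw [h0, norm_smul, Real.norm_eq_abs, ← abs_of_nonneg hnpupos.le, ← abs_mul]
      rw [abs_of_nonneg hnpupos.le]
      congr 1
      field_simp
    have h2 : ‖y - p b u‖ ≤ 1/4 := by
      rw [h1, abs_of_nonneg (by linarith)]
      linarith
    calc ‖y - u‖ = ‖(y - p b u) + (p b u - u)‖ := by congr 1; abel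
      _ ≤ ‖y - p b u‖ + ‖p b u - u‖ := norm_add_le _ _
      _ ≤ 1/2 := by linarith
  -- the phase-corrected vector yh
  set c₀ := ⟪x, y⟫ with hc₀def
  set α : ℂ := if c₀ = 0 then 1 else c₀ / (‖c₀‖ : ℂ) with hαdef
  have habs : ‖α‖ = 1 := by
    rw [hαdef]
    split_ifs with h
    · simp
    · rw [norm_div, Complex.norm_real, norm_norm]
      exact div_self (norm_ne_zero_iff.mpr h)
  set yh := (starRingEnd ℂ α) • y with hyhdef
  have hyh1 : ‖yh‖ = 1 := by
    rw [hyhdef, norm_smul, RCLike.norm_conj, habs, one_mul, hy1]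
  have hpyh : p b yh = yh := by
    rw [hyhdef, map_smul, hpy]
  have hkey : ⟪x, yh⟫ = ((‖c₀‖ : ℝ) : ℂ) := by
    rw [hyhdef, inner_smul_right, ← hc₀def, hαdef]
    split_ifs with h
    · simp [h]
    · rw [map_div₀, Complex.conj_ofReal, div_mul_eq_mul_div]
      rw [← Complex.normSq_eq_conj_mul_self, Complex.normSq_eq_norm_sq]
      have hne : (‖c₀‖ : ℂ) ≠ 0 := by
        simpa using h
      field_simp
      norm_cast
  have hre0 : 0 ≤ (⟪x, yh⟫).re := by
    rw [hkey, Complex.ofReal_re]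
    exact norm_nonneg _
  have hre1 : (⟪x, yh⟫).re ≤ 1 := by
    rw [hkey, Complex.ofReal_re]
    have := norm_inner_le_norm (𝕜 := ℂ) x y
    rw [hx1, hy1, one_mul, ← hc₀def] at this
    simpa using this
  set θ := α.arg with hθdef
  have hexpθ : Complex.exp ((θ:ℝ) * Complex.I) = α := by
    have h := Complex.norm_mul_exp_arg_mul_I α
    rwa [habs, Complex.ofReal_one, one_mul, ← hθdef] at h
  have hγ1 : pathγ x yh θ 1 = y := by
    rw [pathγ_one, hexpθ, hyhdef, smul_smul, Complex.mul_conj, Complex.normSq_eq_norm_sq, habs]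
    norm_num
  have hγmem : ∀ σ : ℝ, p b (pathγ x yh θ σ) = pathγ x yh θ σ := by
    intro σ
    obtain ⟨a, b', hab⟩ := pathγ_comb x yh θ σ
    rw [hab]
    simp only [map_add, map_smul, hpx, hpyh]
  -- choice of δ
  have hfcont : Continuous fun t : Set.Icc (0:ℝ) 1 => ‖p t x - x‖ + ‖p t yh - yh‖ :=
    (((hsc x).sub continuous_const).norm).add (((hsc yh).sub continuous_const).norm)
  have hfb : ‖p b x - x‖ + ‖p b yh - yh‖ = 0 := by
    rw [hpx, hpyh]
    simp
  obtain ⟨δ, hδpos, hδ⟩ := Metric.continuousAt_iff.1 (hfcont.continuousAt (x := b))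
    (1/4) (by norm_num)
  have hδ' : ∀ s : Set.Icc (0:ℝ) 1, dist s b < δ →
      ‖p s x - x‖ + ‖p s yh - yh‖ < 1/4 := by
    intro s hs
    have := hδ hs
    rw [hfb, Real.dist_eq, sub_zero] at this
    exact lt_of_le_of_lt (le_abs_self _) this
  set δ₂ : ℝ := min δ (m.1 - b.1) with hδ₂def
  have hδ₂pos : 0 < δ₂ := lt_min hδpos (by
    rw [sub_pos]
    exact hlt)
  -- clamped time and path parameter
  have ht'mem : ∀ t : Set.Icc (0:ℝ) 1, min (max t.1 b.1) m.1 ∈ Set.Icc (0:ℝ) 1 := by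
    intro t
    constructor
    · exact le_min (le_trans b.2.1 (le_max_right _ _)) m.2.1
    · exact le_trans (min_le_right _ _) m.2.2
  set t' : Set.Icc (0:ℝ) 1 → Set.Icc (0:ℝ) 1 := fun t => ⟨min (max t.1 b.1) m.1, ht'mem t⟩
    with ht'def
  have ht'b : ∀ t, b ≤ t' t := by
    intro t
    show b.1 ≤ min (max t.1 b.1) m.1
    exact le_min (le_max_right _ _) hbm
  have ht'm : ∀ t, t' t ≤ m := by
    intro t
    show min (max t.1 b.1) m.1 ≤ m.1
    exact min_le_right _ _
  have ht'cont : Continuous t' :=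
    Continuous.subtype_mk ((continuous_subtype_val.max continuous_const).min
      continuous_const) _
  have ht'eq : ∀ t, b ≤ t → t ≤ m → t' t = t := by
    intro t h1 h2
    apply Subtype.ext
    show min (max t.1 b.1) m.1 = t.1
    rw [max_eq_left (Subtype.coe_le_coe.mpr h1), min_eq_left (Subtype.coe_le_coe.mpr h2)]
  set ψ : ℝ → ℝ := fun s => min 1 ((s - b.1)/δ₂) with hψdef
  have hψcont : Continuous ψ := by
    apply continuous_const.min
    exact (continuous_id.sub continuous_const).div_const _
  have hψ0 : ∀ t, 0 ≤ ψ (t' t).1 := by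
    intro t
    apply le_min zero_le_one
    apply div_nonneg _ hδ₂pos.le
    rw [sub_nonneg]
    exact ht'b t
  have hψ1 : ∀ t, ψ (t' t).1 ≤ 1 := fun t => min_le_left _ _
  -- the extension function
  set c : Set.Icc (0:ℝ) 1 → H := fun t => p (t' t) (pathγ x yh θ (ψ (t' t).1)) with hcdef
  have hccont : Continuous c := by
    apply joint_cont p hsc (fun t w => (hproj t).norm_apply_le w) t' _ ht'cont
    exact (pathγ_cont x yh θ).comp (hψcont.comp (continuous_subtype_val.comp ht'cont))
  have hclow : ∀ t, 1/4 ≤ ‖c t‖ := by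
    intro t
    by_cases hcase : δ₂ ≤ (t' t).1 - b.1
    · have hψeq : ψ (t' t).1 = 1 := by
        apply min_eq_left
        rw [le_div_iff₀ hδ₂pos, one_mul]
        exact hcase
      rw [hcdef]
      simp only []
      rw [hψeq, hγ1]
      have h1 : 3/4 ≤ ‖p (t' t) u‖ := by
        have h := norm_sub_norm_le u (p (t' t) u)
        rw [norm_sub_rev] at h
        rw [hu] at h
        have := hmu (t' t) (ht'b t) (ht'm t)
        linarith
      have h2 : ‖p (t' t) y - p (t' t) u‖ ≤ 1/2 := by
        rw [← map_sub]
        exact le_trans ((hproj _).norm_apply_le _) hyu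
      have h3 : ‖p (t' t) u‖ ≤ ‖p (t' t) y‖ + ‖p (t' t) y - p (t' t) u‖ := by
        calc ‖p (t' t) u‖ = ‖p (t' t) y - (p (t' t) y - p (t' t) u)‖ := by congr 1; abel
          _ ≤ ‖p (t' t) y‖ + ‖p (t' t) y - p (t' t) u‖ := norm_sub_le _ _
      linarith
    · push_neg at hcase
      have hdist : dist (t' t) b < δ := by
        rw [Subtype.dist_eq, Real.dist_eq, abs_of_nonneg (by rw [sub_nonneg]; exact ht'b t)]
        calc (t' t).1 - b.1 < δ₂ := hcase
          _ ≤ δ := min_le_left _ _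
      have hf := hδ' (t' t) hdist
      have hdec := pathγ_dec x yh θ (ψ (t' t).1) (hψ0 t) (hψ1 t) (p (t' t))
      have hlow := pathγ_low x yh θ hx1 hyh1 hre0 hre1 (ψ (t' t).1) (hψ0 t) (hψ1 t)
      have h4 : ‖pathγ x yh θ (ψ (t' t).1)‖ ≤ ‖c t‖ +
          ‖p (t' t) (pathγ x yh θ (ψ (t' t).1)) - pathγ x yh θ (ψ (t' t).1)‖ := by
        rw [hcdef]
        simp only []
        calc ‖pathγ x yh θ (ψ (t' t).1)‖
            = ‖p (t' t) (pathγ x yh θ (ψ (t' t).1)) -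
              (p (t' t) (pathγ x yh θ (ψ (t' t).1)) - pathγ x yh θ (ψ (t' t).1))‖ := by
              congr 1; abel
          _ ≤ _ := norm_sub_le _ _
      linarith
  have hcne : ∀ t, c t ≠ 0 := by
    intro t h
    have := hclow t
    rw [h, norm_zero] at this
    norm_num at this
  -- gluing
  set v' : Set.Icc (0:ℝ) 1 → H := fun t => if t.1 ≤ b.1 then v t else ‖c t‖⁻¹ • c t
    with hv'def
  have hv'cont : Continuous v' := by
    apply Continuous.if_le hv ((hccont.norm.inv₀ (fun t => by
      intro h
      exact hcne t (norm_eq_zero.mp h))).smul hccont) continuous_subtype_val continuous_const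
    intro t ht
    have htb : t = b := Subtype.ext ht
    subst htb
    have ht'bb : t' t = t := ht'eq t le_rfl hbm
    have hψb : ψ (t' t).1 = 0 := by
      rw [ht'bb]
      rw [hψdef]
      simp only []
      rw [sub_self, zero_div]
      exact min_eq_right zero_le_one
    have hcb : c t = x := by
      rw [hcdef]
      simp only []
      rw [hψb, pathγ_zero, ht'bb, hpx]
    show v t = ‖c t‖⁻¹ • c t
    rw [hcb, hx1]
    norm_num
    exact hxdef.symm
  refine ⟨v', hv'cont, ?_⟩
  intro t htm
  by_cases htb : t.1 ≤ b.1
  · rw [hv'def]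
    simp only [if_pos htb]
    exact hvp t htb
  · push_neg at htb
    have hbt : b ≤ t := le_of_lt htb
    have ht'tt : t' t = t := ht'eq t hbt htm
    have hct : p t (c t) = c t := by
      rw [hcdef]
      simp only []
      rw [ht'tt]
      exact (hproj t).idem _
    have hcnorm : ‖c t‖ ≠ 0 := fun h => hcne t (norm_eq_zero.mp h)
    constructor
    · rw [hv'def]
      simp only [if_neg (not_le.mpr htb)]
      rw [norm_smul, norm_inv, norm_norm]
      field_simp
    · rw [hv'def]
      simp only [if_neg (not_le.mpr htb)]
      rw [map_smul_of_tower, hct]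


lemma exists_unit_section (p : Set.Icc (0:ℝ) 1 → H →L[ℂ] H)
    (hsc : ∀ v : H, Continuous fun t => p t v)
    (hproj : ∀ t, IsProjection (p t))
    (hne : ∀ t, ∃ u : H, ‖u‖ = 1 ∧ p t u = u) :
    ∃ v : Set.Icc (0:ℝ) 1 → H, Continuous v ∧ ∀ t, ‖v t‖ = 1 ∧ p t (v t) = v t := by
  set B : Set ℝ := {r | r ∈ Set.Icc (0:ℝ) 1 ∧ ∃ v : Set.Icc (0:ℝ) 1 → H,
    Continuous v ∧ ∀ t, t.1 ≤ r → (‖v t‖ = 1 ∧ p t (v t) = v t)} with hBdef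
  have h0B : (0:ℝ) ∈ B := by
    obtain ⟨u₀, hu₀, hpu₀⟩ := hne ⟨0, by norm_num⟩
    refine ⟨by norm_num, fun _ => u₀, continuous_const, ?_⟩
    intro t ht
    have : t = ⟨0, by norm_num⟩ := Subtype.ext (le_antisymm ht t.2.1)
    rw [this]
    exact ⟨hu₀, hpu₀⟩
  have hBne : B.Nonempty := ⟨0, h0B⟩
  have hbdd : BddAbove B := ⟨1, fun r hr => hr.1.2⟩
  set s := sSup B with hsdef
  have hs0 : 0 ≤ s := le_csSup hbdd h0B
  have hs1 : s ≤ 1 := csSup_le hBne (fun r hr => hr.1.2)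
  set sbar : Set.Icc (0:ℝ) 1 := ⟨s, hs0, hs1⟩ with hsbardef
  obtain ⟨u, hu1, hpu⟩ := hne sbar
  have hg : Continuous fun t : Set.Icc (0:ℝ) 1 => ‖p t u - u‖ :=
    ((hsc u).sub continuous_const).norm
  obtain ⟨ε, hεpos, hε⟩ := Metric.continuousAt_iff.1 (hg.continuousAt (x := sbar))
    (1/4) (by norm_num)
  have hε' : ∀ t, dist t sbar < ε → ‖p t u - u‖ < 1/4 := by
    intro t ht
    have := hε ht
    rw [hpu, sub_self, norm_zero, Real.dist_eq, sub_zero] at this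
    exact lt_of_le_of_lt (le_abs_self _) this
  obtain ⟨r, hrB, hrs⟩ := exists_lt_of_lt_csSup hBne (show s - ε/2 < s by linarith)
  have hrs' : r ≤ s := le_csSup hbdd hrB
  set bbar : Set.Icc (0:ℝ) 1 := ⟨r, hrB.1⟩ with hbbardef
  have hmIcc : min (s + ε/2) 1 ∈ Set.Icc (0:ℝ) 1 :=
    ⟨le_min (by linarith) zero_le_one, min_le_right _ _⟩
  set mbar : Set.Icc (0:ℝ) 1 := ⟨min (s + ε/2) 1, hmIcc⟩ with hmbardef
  have hbm : bbar ≤ mbar := by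
    show r ≤ min (s + ε/2) 1
    exact le_min (by linarith) hrB.1.2
  obtain ⟨v, hv, hvp⟩ := hrB.2
  have hmu : ∀ t, bbar ≤ t → t ≤ mbar → ‖p t u - u‖ ≤ 1/4 := by
    intro t h1 h2
    have h1' : r ≤ t.1 := h1
    have h2' : t.1 ≤ min (s + ε/2) 1 := h2
    have h2'' : t.1 ≤ s + ε/2 := le_trans h2' (min_le_left _ _)
    apply le_of_lt
    apply hε'
    rw [Subtype.dist_eq, Real.dist_eq, abs_lt]
    constructor <;> [linarith; linarith]
  obtain ⟨v', hv', hv'p⟩ := step_lemma p hsc hproj bbar mbar hbm v hv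
    (fun t ht => hvp t ht) u hu1 hmu
  have hmB : min (s + ε/2) 1 ∈ B := by
    refine ⟨hmIcc, v', hv', ?_⟩
    intro t ht
    exact hv'p t ht
  have hms : min (s + ε/2) 1 ≤ s := le_csSup hbdd hmB
  have hs1' : s = 1 := by
    by_contra h
    have : s < 1 := lt_of_le_of_ne hs1 h
    have : s < min (s + ε/2) 1 := lt_min (by linarith) this
    linarith
  have hmeq : min (s + ε/2) 1 = 1 := by
    rw [hs1']
    exact min_eq_right (by linarith)
  rw [hmeq] at hmB
  obtain ⟨_, v'', hv''c, hv''p⟩ := hmB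
  exact ⟨v'', hv''c, fun t => hv''p t t.2.2⟩


lemma mul_apply_eq {A B C : H →L[ℂ] H} (h : A * B = C) (z : H) : A (B z) = C z := by
  rw [← ContinuousLinearMap.mul_apply, h]

lemma key_lemma (n : ℕ) : ∀ (p : Set.Icc (0:ℝ) 1 → H →L[ℂ] H),
    (∀ v : H, Continuous fun t => p t v) →
    (∀ t, IsProjection (p t)) →
    (∀ t, (n : Cardinal) ≤ Module.rank ℂ (LinearMap.range (p t : H →ₗ[ℂ] H))) →
    ∃ q : Set.Icc (0:ℝ) 1 → H →L[ℂ] H,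
      Continuous q ∧
      (∀ t, IsProjection (q t)) ∧
      (∀ t, p t * q t = q t ∧ q t * p t = q t) ∧
      (∀ t, FiniteDimensional ℂ (LinearMap.range (q t : H →ₗ[ℂ] H)) ∧
        finrank ℂ (LinearMap.range (q t : H →ₗ[ℂ] H)) = n) := by
  induction n with
  | zero =>
    intro p hsc hproj hrank
    refine ⟨fun _ => 0, continuous_const, ?_, ?_, ?_⟩
    · intro t
      exact ⟨IsSelfAdjoint.zero _, by simp⟩
    · intro t
      exact ⟨by simp, by simp⟩
    · intro t
      have hbot : LinearMap.range ((0 : H →L[ℂ] H) : H →ₗ[ℂ] H) = ⊥ := by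
        rw [Submodule.eq_bot_iff]
        rintro w ⟨z, rfl⟩
        simp
      constructor
      · show FiniteDimensional ℂ (LinearMap.range ((0 : H →L[ℂ] H) : H →ₗ[ℂ] H))
        rw [hbot]
        infer_instance
      · show finrank ℂ (LinearMap.range ((0 : H →L[ℂ] H) : H →ₗ[ℂ] H)) = 0
        rw [hbot]
        exact finrank_bot ℂ H
  | succ n IH =>
    intro p hsc hproj hrank
    -- a continuous unit section of p
    have hne : ∀ t, ∃ u : H, ‖u‖ = 1 ∧ p t u = u := by
      intro t
      have hpos : 0 < Module.rank ℂ (LinearMap.range (p t : H →ₗ[ℂ] H)) := by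
        refine lt_of_lt_of_le ?_ (hrank t)
        exact_mod_cast Nat.succ_pos n
      obtain ⟨x, hx⟩ := rank_pos_iff_exists_ne_zero.mp hpos
      have hx1 : (x : H) ≠ 0 := fun h => hx (Subtype.ext h)
      obtain ⟨z, hz⟩ := x.2
      have hfix : p t (x : H) = (x : H) := by
        rw [← hz]
        exact (hproj t).idem z
      refine ⟨‖(x:H)‖⁻¹ • (x:H), norm_smul_inv_norm hx1, ?_⟩
      rw [map_smul_of_tower, hfix]
    obtain ⟨v, hv, hvp⟩ := exists_unit_section p hsc hproj hne
    have hv1 : ∀ t, ‖v t‖ = 1 := fun t => (hvp t).1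
    have hpv : ∀ t, p t (v t) = v t := fun t => (hvp t).2
    set r : Set.Icc (0:ℝ) 1 → H →L[ℂ] H := fun t => rk1 (v t) with hrdef
    have hrproj : ∀ t, IsProjection (r t) := fun t => rk1_proj (hv1 t)
    have hpr : ∀ t, p t * r t = r t := by
      intro t
      ext w
      rw [ContinuousLinearMap.mul_apply, hrdef]
      simp only [rk1_apply]
      rw [map_smul, hpv]
    have hrp : ∀ t, r t * p t = r t := by
      intro t
      ext w
      rw [ContinuousLinearMap.mul_apply, hrdef]
      simp only [rk1_apply]
      congr 1
      rw [← (hproj t).inner_comm, hpv]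
    set p' : Set.Icc (0:ℝ) 1 → H →L[ℂ] H := fun t => p t - r t with hp'def
    have hp'proj : ∀ t, IsProjection (p' t) := by
      intro t
      constructor
      · exact ((hproj t).1).sub ((hrproj t).1)
      · rw [hp'def]
        simp only []
        rw [sub_mul, mul_sub, mul_sub, (hproj t).2, (hrproj t).2, hpr, hrp]
        abel
    have hp'r : ∀ t, p' t * r t = 0 := by
      intro t
      rw [hp'def]
      simp only []
      rw [sub_mul, hpr, (hrproj t).2, sub_self]
    have hrp' : ∀ t, r t * p' t = 0 := by
      intro t
      rw [hp'def]
      simp only []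
      rw [mul_sub, hrp, (hrproj t).2, sub_self]
    have hsc' : ∀ w : H, Continuous fun t => p' t w := by
      intro w
      rw [hp'def]
      simp only [ContinuousLinearMap.sub_apply]
      apply (hsc w).sub
      simp only [hrdef, rk1_apply]
      exact (Continuous.inner hv continuous_const).smul hv
    have hrank' : ∀ t, (n : Cardinal) ≤ Module.rank ℂ (LinearMap.range (p' t : H →ₗ[ℂ] H)) := by
      intro t
      have hle : LinearMap.range (p t : H →ₗ[ℂ] H) ≤ LinearMap.range (p' t : H →ₗ[ℂ] H) ⊔ LinearMap.range (r t : H →ₗ[ℂ] H) := by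
        rintro w ⟨z, rfl⟩
        rw [Submodule.mem_sup]
        refine ⟨p' t z, LinearMap.mem_range.mpr ⟨z, rfl⟩,
          r t z, LinearMap.mem_range.mpr ⟨z, rfl⟩, ?_⟩
        rw [hp'def]
        simp [ContinuousLinearMap.sub_apply]
      have h1 : Module.rank ℂ (LinearMap.range (r t : H →ₗ[ℂ] H)) ≤ 1 := by
        rw [hrdef]
        simp only []
        rw [rk1_range (hv1 t)]
        refine le_trans (rank_span_le _) ?_
        simp
      have h2 : ((n+1 : ℕ) : Cardinal) ≤ Module.rank ℂ (LinearMap.range (p' t : H →ₗ[ℂ] H)) + 1 :=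
        calc ((n+1 : ℕ) : Cardinal) ≤ Module.rank ℂ (LinearMap.range (p t : H →ₗ[ℂ] H)) := hrank t
          _ ≤ Module.rank ℂ ((LinearMap.range (p' t : H →ₗ[ℂ] H) ⊔ LinearMap.range (r t : H →ₗ[ℂ] H) :
              Submodule ℂ H)) := Submodule.rank_mono hle
          _ ≤ Module.rank ℂ (LinearMap.range (p' t : H →ₗ[ℂ] H)) + Module.rank ℂ (LinearMap.range (r t : H →ₗ[ℂ] H)) :=
              Submodule.rank_add_le_rank_add_rank _ _
          _ ≤ Module.rank ℂ (LinearMap.range (p' t : H →ₗ[ℂ] H)) + 1 := by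
              exact add_le_add_right h1 _
      have h3 : ((n : Cardinal) + 1) ≤ Module.rank ℂ (LinearMap.range (p' t : H →ₗ[ℂ] H)) + 1 := by
        push_cast at h2
        exact h2
      exact Cardinal.add_one_le_add_one_iff.mp h3
    obtain ⟨q', hq'c, hq'proj, hq'comm, hq'rank⟩ := IH p' hsc' hp'proj hrank'
    have hq'r : ∀ t, q' t * r t = 0 := by
      intro t
      rw [← (hq'comm t).2, mul_assoc, hp'r, mul_zero]
    have hrq' : ∀ t, r t * q' t = 0 := by
      intro t
      rw [← (hq'comm t).1, ← mul_assoc, hrp', zero_mul]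
    set q : Set.Icc (0:ℝ) 1 → H →L[ℂ] H := fun t => q' t + r t with hqdef
    have hrcont : Continuous r := rk1_cont hv hv1
    refine ⟨q, hq'c.add hrcont, ?_, ?_, ?_⟩
    · intro t
      constructor
      · exact ((hq'proj t).1).add ((hrproj t).1)
      · rw [hqdef]
        simp only []
        rw [add_mul, mul_add, mul_add, (hq'proj t).2, (hrproj t).2, hq'r, hrq']
        abel
    · intro t
      have hpp' : p t * p' t = p' t := by
        rw [hp'def]
        simp only []
        rw [mul_sub, (hproj t).2, hpr]
      have hp'p : p' t * p t = p' t := by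
        rw [hp'def]
        simp only []
        rw [sub_mul, (hproj t).2, hrp]
      have hpq' : p t * q' t = q' t := by
        rw [← (hq'comm t).1, ← mul_assoc, hpp']
      have hq'p : q' t * p t = q' t := by
        rw [← (hq'comm t).2, mul_assoc, hp'p]
      constructor
      · rw [hqdef]
        simp only []
        rw [mul_add, hpq', hpr t]
      · rw [hqdef]
        simp only []
        rw [add_mul, hq'p, hrp t]
    · intro t
      have hrangeq : LinearMap.range (q t : H →ₗ[ℂ] H) = LinearMap.range (q' t : H →ₗ[ℂ] H) ⊔ LinearMap.range (r t : H →ₗ[ℂ] H) := by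
        apply le_antisymm
        · rintro w ⟨z, rfl⟩
          rw [Submodule.mem_sup]
          exact ⟨q' t z, LinearMap.mem_range.mpr ⟨z, rfl⟩,
            r t z, LinearMap.mem_range.mpr ⟨z, rfl⟩, by
              rw [hqdef];simp [ContinuousLinearMap.add_apply]⟩
        · apply sup_le
          · rintro w ⟨z, rfl⟩
            refine LinearMap.mem_range.mpr ⟨q' t z, ?_⟩
            show q t (q' t z) = q' t z
            rw [hqdef]
            simp only [ContinuousLinearMap.add_apply]
            rw [mul_apply_eq (hq'proj t).2, mul_apply_eq (hrq' t)]
            simp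
          · rintro w ⟨z, rfl⟩
            refine LinearMap.mem_range.mpr ⟨r t z, ?_⟩
            show q t (r t z) = r t z
            rw [hqdef]
            simp only [ContinuousLinearMap.add_apply]
            rw [mul_apply_eq (hq'r t), mul_apply_eq (hrproj t).2]
            simp
      have hinf : LinearMap.range (q' t : H →ₗ[ℂ] H) ⊓ LinearMap.range (r t : H →ₗ[ℂ] H) = ⊥ := by
        rw [Submodule.eq_bot_iff]
        rintro w hw
        rw [Submodule.mem_inf] at hw
        obtain ⟨⟨a, ha⟩, ⟨c, hc⟩⟩ := hw
        have h1 : r t w = w := by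
          rw [← hc, ContinuousLinearMap.coe_coe, mul_apply_eq (hrproj t).2]
        have h2 : r t w = 0 := by
          rw [← ha, ContinuousLinearMap.coe_coe, mul_apply_eq (hrq' t)]
          simp
        rw [h1] at h2
        exact h2
      haveI hfd1 : FiniteDimensional ℂ (LinearMap.range (q' t : H →ₗ[ℂ] H)) := (hq'rank t).1
      haveI hfd2 : FiniteDimensional ℂ (LinearMap.range (r t : H →ₗ[ℂ] H)) := by
        rw [hrdef]
        simp only []
        rw [rk1_range (hv1 t)]
        infer_instance
      haveI hfd : FiniteDimensional ℂ (LinearMap.range (q t : H →ₗ[ℂ] H)) := by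
        rw [hrangeq]
        infer_instance
      refine ⟨hfd, ?_⟩
      have hfr : finrank ℂ (LinearMap.range (r t : H →ₗ[ℂ] H)) = 1 := by
        rw [hrdef]
        simp only []
        rw [rk1_range (hv1 t)]
        apply finrank_span_singleton
        intro h
        have := hv1 t
        rw [h, norm_zero] at this
        norm_num at this
      have := Submodule.finrank_sup_add_finrank_inf_eq (LinearMap.range (q' t : H →ₗ[ℂ] H))
        (LinearMap.range (r t : H →ₗ[ℂ] H))
      rw [hinf, finrank_bot, add_zero, (hq'rank t).2, hfr] at this
      rw [hrangeq, this]


end Main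

/-- A strongly continuous projection-valued function on `[0,1]` whose ranges all have
dimension at least `n` dominates a norm-continuous projection-valued function of
constant rank `n` (the continuous field of Hilbert spaces determined by `p` has a
trivial subfield of rank `n`). -/
theorem exists_rank_n_subprojection {H : Type*} [NormedAddCommGroup H]
    [InnerProductSpace ℂ H] [CompleteSpace H] [TopologicalSpace.SeparableSpace H]
    (n : ℕ) (p : Set.Icc (0:ℝ) 1 → H →L[ℂ] H)
    (hsc : ∀ v : H, Continuous fun t => p t v)
    (hproj : ∀ t, IsProjection (p t))
    (hrank : ∀ t, (n : Cardinal) ≤ Module.rank ℂ (LinearMap.range (p t : H →ₗ[ℂ] H))) :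
    ∃ q : Set.Icc (0:ℝ) 1 → H →L[ℂ] H,
      Continuous q ∧
      (∀ t, IsProjection (q t)) ∧
      (∀ t, p t * q t = q t ∧ q t * p t = q t) ∧
      (∀ t, FiniteDimensional ℂ (LinearMap.range (q t : H →ₗ[ℂ] H)) ∧
        finrank ℂ (LinearMap.range (q t : H →ₗ[ℂ] H)) = n) := by
  exact key_lemma n p hsc hproj hrank
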